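/- The expected number of moves of symbol p in the Fisher-Yates algorithm on n symbols is E[M_{n,p}] = (n + 2p - 2 - H_{p-1})/n, where H_{p-1} = ∑_{i=1}^{p-1} 1/i. -/

import Mathlib

/-- The number of moves of a symbol in the Fisher–Yates algorithm, defined
recursively via the triangular decomposition. -/
def movesAux {N : ℕ} : ℕ → Equiv.Perm (Fin N) → Fin N → ℕ
  | 0, _, _ => 1
  | k + 1, π, p =>
    if h : k + 1 < N then
      let lst : Fin N := ⟨k + 1, h⟩
      let q := π⁻¹ lst
      if p = lst then
        if q = lst then 1 else 1 + movesAux k (π * Equiv.swap lst q) q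
      else if p = q then 1 else movesAux k (π * Equiv.swap lst q) p
    else 1

/-- Number of moves of symbol `p` (0-based) when Fisher–Yates produces `π`. -/
def moves {n : ℕ} (π : Equiv.Perm (Fin n)) (p : Fin n) : ℕ :=
  movesAux (n - 1) π p


def Hq (m : ℕ) : ℚ := ∑ i ∈ Finset.Icc 1 m, (1 : ℚ) / i

lemma Hq_succ (m : ℕ) : Hq (m+1) = Hq m + 1/(m+1) := by
  unfold Hq
  rw [Finset.sum_Icc_succ_top (by omega)]
  push_cast; ring

lemma Hq_sum (k : ℕ) : ∑ j ∈ Finset.range (k+1), Hq j = (k+1) * Hq k - k := by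
  induction k with
  | zero => simp [Hq]
  | succ k ih =>
    rw [Finset.sum_range_succ, ih, Hq_succ]
    have : ((k:ℚ)+1) ≠ 0 := by positivity
    push_cast
    field_simp
    ring

def Pset (n k : ℕ) : Finset (Equiv.Perm (Fin n)) :=
  Finset.univ.filter (fun π => ∀ j : Fin n, k < j.val → π j = j)

def Qset (n k : ℕ) : Finset (Fin n) :=
  Finset.univ.filter (fun j => j.val ≤ k)

lemma mem_Pset {n k : ℕ} {π : Equiv.Perm (Fin n)} :
    π ∈ Pset n k ↔ ∀ j : Fin n, k < j.val → π j = j := by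
  simp [Pset]

lemma mem_Qset {n k : ℕ} {j : Fin n} : j ∈ Qset n k ↔ j.val ≤ k := by
  simp [Qset]

lemma lst_fix {n : ℕ} {k : ℕ} (h : k + 1 < n) {σ : Equiv.Perm (Fin n)}
    (hσ : σ ∈ Pset n k) : σ ⟨k+1, h⟩ = ⟨k+1, h⟩ :=
  mem_Pset.mp hσ _ (by simp)

lemma inv_lst {n : ℕ} {k : ℕ} (h : k + 1 < n) {σ : Equiv.Perm (Fin n)}
    (hσ : σ ∈ Pset n k) (q : Fin n) :
    (σ * Equiv.swap ⟨k+1, h⟩ q)⁻¹ ⟨k+1, h⟩ = q := by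
  have h1 : σ⁻¹ ⟨k+1, h⟩ = ⟨k+1, h⟩ := by
    rw [Equiv.Perm.inv_eq_iff_eq]; exact (lst_fix h hσ).symm
  simp [mul_inv_rev, Equiv.Perm.mul_apply, h1, Equiv.swap_inv, Equiv.swap_apply_left]

lemma mul_swap_cancel {n : ℕ} {k : ℕ} (h : k + 1 < n) (σ : Equiv.Perm (Fin n)) (q : Fin n) :
    (σ * Equiv.swap ⟨k+1, h⟩ q) * Equiv.swap ⟨k+1, h⟩ q = σ := by
  rw [mul_assoc, Equiv.swap_mul_self, mul_one]

lemma sum_bij_step {n : ℕ} {M : Type*} [AddCommMonoid M] (k : ℕ) (h : k + 1 < n)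
    (F : Equiv.Perm (Fin n) → M) :
    ∑ π ∈ Pset n (k+1), F π =
      ∑ q ∈ Qset n (k+1), ∑ σ ∈ Pset n k, F (σ * Equiv.swap ⟨k+1, h⟩ q) := by
  rw [← Finset.sum_product']
  apply Finset.sum_nbij'
    (i := fun π => ((π⁻¹ ⟨k+1, h⟩ : Fin n), π * Equiv.swap ⟨k+1, h⟩ (π⁻¹ ⟨k+1, h⟩)))
    (j := fun x => x.2 * Equiv.swap ⟨k+1, h⟩ x.1)
  · intro π hπ
    have hπ' := mem_Pset.mp hπ
    have hq : (π⁻¹ ⟨k+1, h⟩).val ≤ k + 1 := by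
      by_contra hgt
      push_neg at hgt
      have h2 := hπ' (π⁻¹ ⟨k+1, h⟩) hgt
      rw [show π (π⁻¹ ⟨k+1, h⟩) = ⟨k+1, h⟩ from by simp] at h2
      have h3 := congrArg Fin.val h2
      simp only [Fin.val_mk] at h3
      omega
    rw [Finset.mem_product]
    refine ⟨mem_Qset.mpr hq, mem_Pset.mpr ?_⟩
    intro j hj
    rcases eq_or_ne j ⟨k+1, h⟩ with rfl | hne
    · simp [Equiv.Perm.mul_apply, Equiv.swap_apply_left, Equiv.Perm.coe_inv, Equiv.apply_symm_apply]
    · have hjv : j.val ≠ k + 1 := by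
        intro hv; exact hne (Fin.ext (by simpa using hv))
      have hj2 : k + 1 < j.val := by omega
      have hjq : j ≠ π⁻¹ ⟨k+1, h⟩ := by
        intro hEq; rw [hEq] at hj2; omega
      rw [Equiv.Perm.mul_apply, Equiv.swap_apply_of_ne_of_ne hne hjq]
      exact hπ' j hj2
  · rintro ⟨q, σ⟩ hx
    rw [Finset.mem_product] at hx
    obtain ⟨hq, hσ⟩ := hx
    rw [mem_Qset] at hq
    replace hq : q.val ≤ k + 1 := hq
    replace hσ : σ ∈ Pset n k := hσ
    have hσ' := mem_Pset.mp hσ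
    refine mem_Pset.mpr fun j hj => ?_
    have hjlst : j ≠ ⟨k+1, h⟩ := by
      intro hEq
      have h3 := congrArg Fin.val hEq
      simp only [Fin.val_mk] at h3
      omega
    have hjq : j ≠ q := by
      intro hEq; rw [hEq] at hj; omega
    rw [Equiv.Perm.mul_apply, Equiv.swap_apply_of_ne_of_ne hjlst hjq]
    exact hσ' j (by omega)
  · intro π hπ
    simp only
    rw [mul_swap_cancel]
  · rintro ⟨q, σ⟩ hx
    rw [Finset.mem_product] at hx
    obtain ⟨hq, hσ⟩ := hx
    replace hσ : σ ∈ Pset n k := hσ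
    simp only
    rw [inv_lst h hσ, mul_swap_cancel]
  · intro π hπ
    simp only
    rw [mul_swap_cancel]

lemma movesAux_step {n : ℕ} (k : ℕ) (h : k+1 < n) (q p : Fin n) (σ : Equiv.Perm (Fin n))
    (hσ : σ ∈ Pset n k) (hq : q.val ≤ k+1) :
    movesAux (k+1) (σ * Equiv.swap ⟨k+1,h⟩ q) p =
      if p = ⟨k+1,h⟩ then
        (if q = ⟨k+1,h⟩ then 1 else 1 + movesAux k σ q)
      else if p = q then 1 else movesAux k σ p := by
  rw [movesAux]
  rw [dif_pos h]
  simp only [inv_lst h hσ, mul_swap_cancel h σ q]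

lemma Pset_zero {n : ℕ} (hn : 0 < n) : Pset n 0 = {1} := by
  ext π
  simp only [mem_Pset, Finset.mem_singleton]
  constructor
  · intro hπ
    apply Equiv.ext
    intro j
    simp only [Equiv.Perm.coe_one, id_eq]
    rcases Nat.eq_zero_or_pos j.val with hj | hj
    · by_contra hne
      have hv : 0 < (π j).val := by
        rcases Nat.eq_zero_or_pos (π j).val with h0 | h0
        · exact absurd (Fin.ext (h0.trans hj.symm)) hne
        · exact h0
      exact hne (π.injective (hπ (π j) hv))
    · exact hπ j hj
  · rintro rfl; intro j _; rfl

lemma Qset_succ {n : ℕ} (k : ℕ) (h : k + 1 < n) :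
    Qset n (k+1) = insert ⟨k+1, h⟩ (Qset n k) := by
  ext j
  simp only [mem_Qset, Finset.mem_insert, Fin.ext_iff]
  omega

lemma Qset_card {n : ℕ} (k : ℕ) (h : k < n) : (Qset n k).card = k + 1 := by
  induction k with
  | zero =>
    have : Qset n 0 = {⟨0, by omega⟩} := by
      ext j; simp only [mem_Qset, Finset.mem_singleton, Fin.ext_iff]; omega
    simp [this]
  | succ k ih =>
    rw [Qset_succ k h, Finset.card_insert_of_notMem (by simp [mem_Qset]), ih (by omega)]

lemma Pset_card {n : ℕ} (k : ℕ) (h : k < n) : (Pset n k).card = (k+1).factorial := by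
  induction k with
  | zero => rw [Pset_zero (by omega)]; simp
  | succ k ih =>
    rw [Finset.card_eq_sum_ones, sum_bij_step k h (fun _ => 1)]
    simp only [Finset.sum_const, smul_eq_mul, mul_one]
    rw [ih (by omega), Qset_card (k+1) h]
    rw [Nat.factorial_succ (k+1)]

lemma Qsum {n : ℕ} {M : Type*} [AddCommMonoid M] (m : ℕ) (hm : m < n) (g : ℕ → M) :
    ∑ q ∈ Qset n m, g q.val = ∑ j ∈ Finset.range (m+1), g j := by
  apply Finset.sum_bij (i := fun a _ => a.val)
  · intro a ha; simp only [Finset.mem_range]; exact Nat.lt_succ_of_le (mem_Qset.mp ha)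
  · intro a _ b _ hab; exact Fin.ext hab
  · intro b hb
    simp only [Finset.mem_range] at hb
    exact ⟨⟨b, by omega⟩, mem_Qset.mpr (by show b ≤ m; omega), rfl⟩
  · intro a _; rfl

lemma gauss_q (k : ℕ) : ∑ j ∈ Finset.range (k+1), (j:ℚ) = k*(k+1)/2 := by
  have h2 := Finset.sum_range_id_mul_two (k+1)
  have h3 : ((∑ i ∈ Finset.range (k+1), i : ℕ) : ℚ) * 2 = ((k:ℚ)+1) * k := by
    exact_mod_cast congrArg (Nat.cast : ℕ → ℚ) h2
  push_cast at h3
  linarith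

lemma main_sum {n : ℕ} : ∀ k : ℕ, k < n → ∀ p : Fin n, p.val ≤ k →
    ∑ π ∈ Pset n k, (movesAux k π p : ℚ) =
      (k.factorial : ℚ) * ((k : ℚ) + 1 + 2 * p.val - Hq p.val) := by
  intro k
  induction k with
  | zero =>
    intro hk p hp
    have hp0 : p.val = 0 := by omega
    rw [Pset_zero (by omega), Finset.sum_singleton]
    simp [movesAux, hp0, Hq]
  | succ k ih =>
    intro hk p hp
    rw [sum_bij_step k hk (fun π => (movesAux (k+1) π p : ℚ))]
    have hrw : ∀ q ∈ Qset n (k+1), ∀ σ ∈ Pset n k,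
        (movesAux (k+1) (σ * Equiv.swap ⟨k+1, hk⟩ q) p : ℚ) =
        (if p = ⟨k+1, hk⟩ then
          (if q = ⟨k+1, hk⟩ then (1:ℚ) else 1 + (movesAux k σ q : ℚ))
        else if p = q then (1:ℚ) else (movesAux k σ p : ℚ)) := by
      intro q hq σ hσ
      rw [movesAux_step k hk q p σ hσ (mem_Qset.mp hq)]
      split_ifs <;> push_cast <;> ring
    rw [Finset.sum_congr rfl (fun q hq => Finset.sum_congr rfl (fun σ hσ => hrw q hq σ hσ))]
    rcases eq_or_ne p ⟨k+1, hk⟩ with rfl | hne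
    · -- p is the last symbol
      simp only [eq_self_iff_true, if_true]
      rw [Qset_succ k hk, Finset.sum_insert (by simp [mem_Qset])]
      simp only [eq_self_iff_true, if_true]
      have h1 : ∑ _σ ∈ Pset n k, (1:ℚ) = ((k+1).factorial : ℚ) := by
        rw [Finset.sum_const, Pset_card k (by omega)]
        simp
      rw [h1]
      have h2 : ∀ q ∈ Qset n k,
          (∑ σ ∈ Pset n k, (if q = (⟨k+1, hk⟩ : Fin n) then (1:ℚ)
              else 1 + (movesAux k σ q : ℚ))) =
          (fun m : ℕ => ((k+1).factorial : ℚ)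
              + (k.factorial : ℚ) * ((k:ℚ) + 1 + 2*m - Hq m)) q.val := by
        intro q hq
        have hqv := mem_Qset.mp hq
        have hqne : q ≠ (⟨k+1, hk⟩ : Fin n) := by
          intro hEq
          have h3 := congrArg Fin.val hEq
          simp only [Fin.val_mk] at h3
          omega
        simp only [if_neg hqne]
        rw [Finset.sum_add_distrib, Finset.sum_const, Pset_card k (by omega),
          ih (by omega) q hqv]
        simp only [nsmul_eq_mul, mul_one]
      rw [Finset.sum_congr rfl h2, Qsum k (by omega)
        (fun m : ℕ => ((k+1).factorial : ℚ) + (k.factorial : ℚ) * ((k:ℚ) + 1 + 2*m - Hq m))]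
      rw [Finset.sum_add_distrib, Finset.sum_const, Finset.card_range]
      have h4 : ∑ j ∈ Finset.range (k+1),
          ((k.factorial : ℚ) * ((k:ℚ) + 1 + 2*j - Hq j)) =
          (k.factorial : ℚ) * (((k:ℚ)+1)*((k:ℚ)+1) + 2*((k:ℚ)*((k:ℚ)+1)/2)
            - (((k:ℚ)+1) * Hq k - k)) := by
        rw [← Finset.mul_sum]
        congr 1
        rw [Finset.sum_sub_distrib, Finset.sum_add_distrib, Finset.sum_const,
          Finset.card_range, ← Finset.mul_sum, gauss_q, Hq_sum]
        push_cast
        ring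
      rw [h4]
      rw [Hq_succ]
      have hk0 : ((k:ℚ)+1) ≠ 0 := by positivity
      push_cast [Nat.factorial_succ]
      field_simp
      ring
    · -- p is not the last symbol
      simp only [if_neg hne]
      have hpk : p.val ≤ k := by
        have hv : p.val ≠ k+1 := by
          intro hv
          exact hne (Fin.ext (by simpa using hv))
        omega
      have hinner : ∀ q ∈ Qset n (k+1),
          (∑ σ ∈ Pset n k, (if p = q then (1:ℚ) else (movesAux k σ p : ℚ))) =
          (if p = q then ((k+1).factorial : ℚ)
            else (k.factorial : ℚ) * ((k:ℚ) + 1 + 2*p.val - Hq p.val)) := by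
        intro q hq
        split_ifs with hpq
        · simp only [Finset.sum_const, nsmul_eq_mul, mul_one]
          rw [Pset_card k (by omega)]
        · exact ih (by omega) p hpk
      rw [Finset.sum_congr rfl hinner]
      have hpmem : p ∈ Qset n (k+1) := mem_Qset.mpr (by omega)
      rw [← Finset.sum_erase_add _ _ hpmem, if_pos rfl]
      have herase : ∀ q ∈ (Qset n (k+1)).erase p,
          (if p = q then ((k+1).factorial : ℚ)
            else (k.factorial : ℚ) * ((k:ℚ) + 1 + 2*p.val - Hq p.val)) =
          (k.factorial : ℚ) * ((k:ℚ) + 1 + 2*p.val - Hq p.val) := by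
        intro q hq
        rw [if_neg (fun hEq => (Finset.ne_of_mem_erase hq) hEq.symm)]
      rw [Finset.sum_congr rfl herase, Finset.sum_const,
        Finset.card_erase_of_mem hpmem, Qset_card (k+1) hk]
      simp only [nsmul_eq_mul]
      push_cast [Nat.factorial_succ]
      ring


/-- The expected number of moves of symbol `p` (1-based) in the Fisher–Yates
algorithm on `n` symbols is `(n + 2p - 2 - H_{p-1})/n`. -/
theorem expected_moves (n p : ℕ) (h1 : 1 ≤ p) (h2 : p ≤ n) :
    (∑ π : Equiv.Perm (Fin n), (moves π ⟨p - 1, by omega⟩ : ℚ)) / n.factorial =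
      ((n : ℚ) + 2 * p - 2 - ∑ i ∈ Finset.Icc 1 (p - 1), (1 : ℚ) / i) / n := by
  have hn : 0 < n := by omega
  have hk : n - 1 < n := by omega
  have huniv : Pset n (n-1) = Finset.univ := by
    ext π
    simp only [mem_Pset, Finset.mem_univ, iff_true]
    intro j hj
    exact absurd j.isLt (by omega)
  have hmain := main_sum (n := n) (n-1) hk ⟨p-1, by omega⟩ (by simp only [Fin.val_mk]; omega)
  rw [huniv] at hmain
  simp only [moves]
  rw [hmain]
  simp only [Fin.val_mk]
  have hfac : (n.factorial : ℚ) = n * (n-1).factorial := by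
    rw [← Nat.mul_factorial_pred hn.ne']
    push_cast
    ring
  rw [hfac]
  have hS : Hq (p-1) = ∑ i ∈ Finset.Icc 1 (p - 1), (1 : ℚ) / i := rfl
  rw [hS]
  have hn0 : (n:ℚ) ≠ 0 := by positivity
  have hf0 : ((n-1).factorial : ℚ) ≠ 0 := by positivity
  rw [div_eq_div_iff (by positivity) hn0]
  push_cast [Nat.cast_sub (by omega : 1 ≤ n), Nat.cast_sub h1]
  ring
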